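/- The function F : ℝ^d × Sym_d(ℝ) → ℝ defined by F(p,A) = ⟨p, cof(−A) p⟩ if (⟨q,p⟩ = 0 ⟹ ⟨q, A q⟩ ≤ 0 for all q), and F(p,A) = 0 otherwise, is continuous. -/

import Mathlib

open Matrix

/-- The cofactor matrix of a square matrix: the transpose of the adjugate, i.e.
the unique continuous map with `cof M = det M • M⁻¹` for invertible `M`. -/
noncomputable def cof {d : ℕ} (M : Matrix (Fin d) (Fin d) ℝ) : Matrix (Fin d) (Fin d) ℝ :=
  (Matrix.adjugate M)ᵀ

open Classical in
/-- The operator `F(p,A) = ⟨p, cof(−A) p⟩` when `A` is negative semidefinite on the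
orthogonal complement of `p`, and `F(p,A) = 0` otherwise. -/
noncomputable def Fop {d : ℕ} (p : Fin d → ℝ) (A : Matrix (Fin d) (Fin d) ℝ) : ℝ :=
  if ∀ q : Fin d → ℝ, q ⬝ᵥ p = 0 → q ⬝ᵥ (A *ᵥ q) ≤ 0 then p ⬝ᵥ (cof (-A) *ᵥ p) else 0

open Topology Filter Polynomial

lemma eval_charpoly_neg {d : ℕ} (M : Matrix (Fin d) (Fin d) ℝ) (t : ℝ) :
    ((-M).charpoly).eval t = (M + t • 1).det := by
  rw [Matrix.charpoly, eval_det, matPolyEquiv_charmatrix]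
  simp only [eval_sub, eval_X, eval_C, Matrix.scalar_apply]
  congr 1
  rw [sub_neg_eq_add, add_comm]
  congr 1
  ext i j
  simp [Matrix.smul_apply, Matrix.one_apply, Matrix.diagonal_apply, mul_ite]

/-- The matrix determinant lemma over ℝ, without invertibility assumption. -/
lemma det_add_outer {d : ℕ} (M : Matrix (Fin d) (Fin d) ℝ) (p : Fin d → ℝ) :
    (M + replicateCol Unit p * replicateRow Unit p).det = M.det + p ⬝ᵥ (adjugate M *ᵥ p) := by
  have hcont1 : Continuous fun t : ℝ => M + t • (1 : Matrix (Fin d) (Fin d) ℝ) := by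
    fun_prop
  set f : ℝ → ℝ := fun t => (M + t • 1 + replicateCol Unit p * replicateRow Unit p).det with hf
  set g : ℝ → ℝ := fun t => (M + t • 1).det + p ⬝ᵥ (adjugate (M + t • 1) *ᵥ p) with hg
  have hfc : Continuous f := ((hcont1.add continuous_const).matrix_det)
  have hgc : Continuous g :=
    (hcont1.matrix_det).add ((continuous_const.dotProduct
      ((hcont1.matrix_adjugate).matrix_mulVec continuous_const)))
  have hdense : Dense {t : ℝ | (M + t • 1).det ≠ 0} := by
    have hfin : Set.Countable {t : ℝ | (M + t • 1).det = 0} := by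
      have : {t : ℝ | (M + t • 1).det = 0} ⊆ {t | ((-M).charpoly).IsRoot t} := by
        intro t ht
        simp only [Set.mem_setOf_eq, IsRoot] at *
        rw [eval_charpoly_neg]; exact ht
      exact ((Polynomial.finite_setOf_isRoot ((-M).charpoly_monic.ne_zero)).subset
        this).countable
    exact hfin.dense_compl ℝ
  have heq : ∀ t ∈ {t : ℝ | (M + t • 1).det ≠ 0}, f t = g t := by
    intro t ht
    simp only [Set.mem_setOf_eq] at ht
    have hu : IsUnit (M + t • 1).det := ht.isUnit
    rw [hf, hg]
    dsimp only
    rw [Matrix.det_add_replicateCol_mul_replicateRow hu p p]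
    set A := M + t • (1 : Matrix (Fin d) (Fin d) ℝ)
    have h1 : (1 + replicateRow Unit p * A⁻¹ * replicateCol Unit p).det
        = 1 + p ⬝ᵥ (A⁻¹ *ᵥ p) := by
      rw [Matrix.det_unique]
      simp [Matrix.add_apply, Matrix.one_apply, Matrix.mul_apply, Matrix.replicateRow_apply,
        Matrix.replicateCol_apply, dotProduct, mulVec, Finset.mul_sum]
      rw [Finset.sum_comm]
      exact Finset.sum_congr rfl fun i _ => by
        rw [Finset.sum_mul]; exact Finset.sum_congr rfl fun j _ => by ring
    rw [h1]
    have h2 : A⁻¹ = (A.det)⁻¹ • adjugate A := by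
      rw [Matrix.inv_def, Ring.inverse_eq_inv]
    rw [h2]
    simp only [Matrix.smul_mulVec, dotProduct_smul, smul_eq_mul]
    field_simp
  have : f = g := hfc.ext_on hdense hgc heq
  have h0 := congrFun this 0
  rw [hf, hg] at h0
  simpa using h0

lemma key_zero {d : ℕ} (A : Matrix (Fin d) (Fin d) ℝ) (hA : A.IsSymm) (p q : Fin d → ℝ)
    (hp : p ≠ 0) (hq0 : q ≠ 0) (hqp : q ⬝ᵥ p = 0)
    (hS : ∀ r, r ⬝ᵥ p = 0 → r ⬝ᵥ (A *ᵥ r) ≤ 0)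
    (hq : q ⬝ᵥ (A *ᵥ q) = 0) :
    p ⬝ᵥ (adjugate (-A) *ᵥ p) = 0 := by
  set M : Matrix (Fin d) (Fin d) ℝ := -A with hM
  have hMsymm : Mᵀ = M := by rw [hM, Matrix.transpose_neg, hA.eq]
  have hPSD : ∀ r, r ⬝ᵥ p = 0 → 0 ≤ r ⬝ᵥ (M *ᵥ r) := by
    intro r hr
    have := hS r hr
    rw [hM, Matrix.neg_mulVec, dotProduct_neg]
    linarith
  have hsym : ∀ v w, v ⬝ᵥ (M *ᵥ w) = w ⬝ᵥ (M *ᵥ v) := by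
    intro v w
    rw [dotProduct_mulVec, ← Matrix.mulVec_transpose, hMsymm, dotProduct_comm]
  have hqMq : q ⬝ᵥ (M *ᵥ q) = 0 := by
    rw [hM, Matrix.neg_mulVec, dotProduct_neg, hq, neg_zero]
  -- Step 1 : M *ᵥ q is orthogonal to p-perp
  have step1 : ∀ r, r ⬝ᵥ p = 0 → r ⬝ᵥ (M *ᵥ q) = 0 := by
    intro r hr
    set B := r ⬝ᵥ (M *ᵥ q) with hB
    set C := r ⬝ᵥ (M *ᵥ r) with hC
    have hC0 : 0 ≤ C := hPSD r hr
    have key : ∀ t : ℝ, 0 ≤ 2 * t * B + t ^ 2 * C := by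
      intro t
      have h := hPSD (q + t • r) (by rw [add_dotProduct, smul_dotProduct, hqp, hr]; simp)
      have hexp : (q + t • r) ⬝ᵥ (M *ᵥ (q + t • r))
          = q ⬝ᵥ (M *ᵥ q) + t * (q ⬝ᵥ (M *ᵥ r)) + t * (r ⬝ᵥ (M *ᵥ q)) + t ^ 2 * C := by
        rw [Matrix.mulVec_add, Matrix.mulVec_smul]
        simp only [dotProduct_add, add_dotProduct, dotProduct_smul, smul_dotProduct,
          smul_eq_mul, hC]
        ring
      rw [hexp, hqMq, hsym q r, ← hB] at h
      linarith
    have hC1 : (0:ℝ) < C + 1 := by linarith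
    have h1 := key (-B / (C + 1))
    have h2 : 0 ≤ (2 * (-B / (C + 1)) * B + (-B / (C + 1)) ^ 2 * C) * (C + 1) ^ 2 :=
      mul_nonneg h1 (by positivity)
    have h3 : (2 * (-B / (C + 1)) * B + (-B / (C + 1)) ^ 2 * C) * (C + 1) ^ 2
        = -(B ^ 2) * (C + 2) := by
      field_simp
      ring
    rw [h3] at h2
    have hB2 : B ^ 2 ≤ 0 := by nlinarith
    have : B ^ 2 = 0 := le_antisymm hB2 (sq_nonneg B)
    exact pow_eq_zero_iff (by norm_num) |>.mp this
  -- Step 2 : M *ᵥ q = c • p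
  have hpp0 : p ⬝ᵥ p ≠ 0 := fun h => hp (dotProduct_self_eq_zero.mp h)
  set v : Fin d → ℝ := M *ᵥ q with hv
  set c : ℝ := (v ⬝ᵥ p) / (p ⬝ᵥ p) with hc
  have hvc : v = c • p := by
    set r : Fin d → ℝ := v - c • p with hr
    have hrp : r ⬝ᵥ p = 0 := by
      rw [hr, sub_dotProduct, smul_dotProduct, hc, smul_eq_mul]
      field_simp
      ring
    have hrv : r ⬝ᵥ v = 0 := step1 r hrp
    have hrr : r ⬝ᵥ r = 0 := by
      have h' : r ⬝ᵥ r = r ⬝ᵥ v - c * (r ⬝ᵥ p) := by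
        rw [hr, dotProduct_sub, dotProduct_smul, smul_eq_mul]
      rw [h', hrv, hrp]; ring
    have h0 : v - c • p = 0 := by rw [← hr]; exact dotProduct_self_eq_zero.mp hrr
    exact sub_eq_zero.mp h0
  -- Step 3
  have hpq : p ⬝ᵥ q = 0 := by rw [dotProduct_comm]; exact hqp
  by_cases hc0 : c = 0
  · -- M *ᵥ q = 0
    have hv0 : M *ᵥ q = 0 := by rw [← hv, hvc, hc0, zero_smul]
    have hdet : M.det = 0 := by
      rw [← Matrix.exists_mulVec_eq_zero_iff]
      exact ⟨q, hq0, hv0⟩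
    have hdet2 : (M + replicateCol Unit p * replicateRow Unit p).det = 0 := by
      rw [← Matrix.exists_mulVec_eq_zero_iff]
      refine ⟨q, hq0, ?_⟩
      rw [Matrix.add_mulVec, hv0, ← Matrix.mulVec_mulVec]
      have : replicateRow Unit p *ᵥ q = 0 := by
        ext i
        show p ⬝ᵥ q = 0
        exact hpq
      rw [this]
      simp [Matrix.mulVec_zero]
    have := det_add_outer M p
    rw [hdet, hdet2] at this
    linarith
  · -- M *ᵥ q = c • p with c ≠ 0
    have h4 : adjugate M *ᵥ (M *ᵥ q) = M.det • q := by
      rw [Matrix.mulVec_mulVec, Matrix.adjugate_mul, Matrix.smul_mulVec,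
        Matrix.one_mulVec]
    rw [← hv, hvc, Matrix.mulVec_smul] at h4
    have h5 := congrArg (fun w => p ⬝ᵥ w) h4
    simp only [dotProduct_smul, smul_eq_mul] at h5
    rw [hpq, mul_zero] at h5
    have : p ⬝ᵥ (adjugate M *ᵥ p) = 0 := by
      rcases mul_eq_zero.mp h5 with h | h
      · exact absurd h hc0
      · exact h
    exact this

instance matrixFirstCountable {d : ℕ} : FirstCountableTopology (Matrix (Fin d) (Fin d) ℝ) :=
  (inferInstance : FirstCountableTopology (Fin d → Fin d → ℝ))

instance symmFirstCountable0 {d : ℕ} :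
    FirstCountableTopology {A : Matrix (Fin d) (Fin d) ℝ // A.IsSymm} :=
  TopologicalSpace.firstCountableTopology_induced _ _ (Subtype.val)

set_option synthInstance.maxHeartbeats 1000000 in
set_option maxHeartbeats 2000000 in
lemma frontier_zero {d : ℕ} (x : (Fin d → ℝ) × {A : Matrix (Fin d) (Fin d) ℝ // A.IsSymm})
    (hx : x ∈ frontier {y : (Fin d → ℝ) × {A : Matrix (Fin d) (Fin d) ℝ // A.IsSymm} |
      ∀ q : Fin d → ℝ, q ⬝ᵥ y.1 = 0 → q ⬝ᵥ ((y.2 : Matrix (Fin d) (Fin d) ℝ) *ᵥ q) ≤ 0}) :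
    x.1 ⬝ᵥ (adjugate (-(x.2 : Matrix (Fin d) (Fin d) ℝ)) *ᵥ x.1) = 0 := by
  classical
  set T : Set ((Fin d → ℝ) × {A : Matrix (Fin d) (Fin d) ℝ // A.IsSymm}) :=
    {y : (Fin d → ℝ) × {A : Matrix (Fin d) (Fin d) ℝ // A.IsSymm} |
      ∀ q : Fin d → ℝ, q ⬝ᵥ y.1 = 0 → q ⬝ᵥ ((y.2 : Matrix (Fin d) (Fin d) ℝ) *ᵥ q) ≤ 0} with hT
  by_cases hp : x.1 = 0
  · rw [hp, zero_dotProduct]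
  rw [frontier_eq_closure_inter_closure] at hx
  obtain ⟨hcl, hclC⟩ := hx
  set p : Fin d → ℝ := x.1 with hpdef
  set A : Matrix (Fin d) (Fin d) ℝ := (x.2 : Matrix (Fin d) (Fin d) ℝ) with hAdef
  have hAsymm : A.IsSymm := x.2.2
  have hpp0 : p ⬝ᵥ p ≠ 0 := fun h => hp (dotProduct_self_eq_zero.mp h)
  have hk : Continuous (fun z : (Fin d → ℝ) × Matrix (Fin d) (Fin d) ℝ =>
      z.1 ⬝ᵥ (z.2 *ᵥ z.1)) :=
    (continuous_fst.dotProduct (continuous_snd.matrix_mulVec continuous_fst))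
  -- (a) x itself satisfies the condition
  have hTmem : ∀ q : Fin d → ℝ, q ⬝ᵥ p = 0 → q ⬝ᵥ (A *ᵥ q) ≤ 0 := by
    intro q hq
    set r : (Fin d → ℝ) × {A : Matrix (Fin d) (Fin d) ℝ // A.IsSymm} → (Fin d → ℝ) :=
      fun y => q - ((q ⬝ᵥ y.1) / (y.1 ⬝ᵥ y.1)) • y.1 with hr
    set h : (Fin d → ℝ) × {A : Matrix (Fin d) (Fin d) ℝ // A.IsSymm} → ℝ :=
      fun y => (r y) ⬝ᵥ ((y.2 : Matrix (Fin d) (Fin d) ℝ) *ᵥ (r y)) with hh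
    set U : Set ((Fin d → ℝ) × {A : Matrix (Fin d) (Fin d) ℝ // A.IsSymm}) :=
      {y | y.1 ⬝ᵥ y.1 ≠ 0} with hU
    have hdotc : Continuous
        (fun y : (Fin d → ℝ) × {A : Matrix (Fin d) (Fin d) ℝ // A.IsSymm} => y.1 ⬝ᵥ y.1) :=
      continuous_fst.dotProduct continuous_fst
    have hUopen : IsOpen U := isOpen_compl_singleton.preimage hdotc
    have hxU : x ∈ U := hpp0
    have hrc : ContinuousOn r U := by
      apply ContinuousOn.sub continuousOn_const
      apply ContinuousOn.fun_smul
      · exact ContinuousOn.div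
          (continuous_const.dotProduct continuous_fst).continuousOn
          hdotc.continuousOn (fun y hy => hy)
      · exact continuous_fst.continuousOn
    have hhc : ContinuousOn h U := by
      have heq : h = (fun z : (Fin d → ℝ) × Matrix (Fin d) (Fin d) ℝ => z.1 ⬝ᵥ (z.2 *ᵥ z.1))
          ∘ (fun y : (Fin d → ℝ) × {A : Matrix (Fin d) (Fin d) ℝ // A.IsSymm} =>
            (r y, (y.2 : Matrix (Fin d) (Fin d) ℝ))) := rfl
      rw [heq]
      exact hk.comp_continuousOn
        (hrc.prodMk ((continuous_subtype_val.comp continuous_snd).continuousOn))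
    have hle : ∀ y ∈ T ∩ U, h y ≤ 0 := by
      rintro y ⟨hyT, hyU⟩
      apply hyT
      rw [hr]
      simp only [sub_dotProduct, smul_dotProduct, smul_eq_mul]
      rw [div_mul_eq_mul_div, mul_div_assoc, div_self hyU, mul_one, sub_self]
    have hclTU : x ∈ closure (T ∩ U) := by
      rw [mem_closure_iff_nhds] at hcl ⊢
      intro t ht
      rcases hcl (t ∩ U) (Filter.inter_mem ht (hUopen.mem_nhds hxU)) with ⟨y, ⟨hyt, hyU⟩, hyT⟩
      exact ⟨y, hyt, hyT, hyU⟩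
    have hne : (𝓝[T ∩ U] x).NeBot := mem_closure_iff_nhdsWithin_neBot.mp hclTU
    have hcwa : ContinuousWithinAt h (T ∩ U) x :=
      (hhc.continuousWithinAt hxU).mono Set.inter_subset_right
    have hxle : h x ≤ 0 :=
      le_of_tendsto hcwa (eventually_nhdsWithin_of_forall hle)
    have heval : h x = q ⬝ᵥ (A *ᵥ q) := by
      rw [hh, hr]
      simp only [← hpdef, ← hAdef, hq, zero_div, zero_smul, sub_zero]
    rwa [heval] at hxle
  -- (b) produce the degenerate direction qlim
  obtain ⟨u, huC, hu⟩ := mem_closure_iff_seq_limit.mp hclC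
  have hqex : ∀ n, ∃ qq : Fin d → ℝ, qq ⬝ᵥ (u n).1 = 0 ∧
      0 < qq ⬝ᵥ (((u n).2 : Matrix (Fin d) (Fin d) ℝ) *ᵥ qq) := by
    intro n
    have hn := huC n
    simp only [hT, Set.mem_compl_iff, Set.mem_setOf_eq] at hn
    push_neg at hn
    obtain ⟨qq, h1, h2⟩ := hn
    exact ⟨qq, h1, h2⟩
  choose qn hqn1 hqn2 using hqex
  have hqn0 : ∀ n, qn n ≠ 0 := by
    intro n h
    have h2 := hqn2 n
    rw [h] at h2
    simp at h2
  set w : ℕ → (Fin d → ℝ) := fun n => ‖qn n‖⁻¹ • qn n with hwdef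
  have hwmem : ∀ n, w n ∈ Metric.sphere (0 : Fin d → ℝ) 1 := by
    intro n
    simp only [hwdef, Metric.mem_sphere, dist_zero_right, norm_smul, norm_inv, norm_norm]
    exact inv_mul_cancel₀ (norm_ne_zero_iff.mpr (hqn0 n))
  obtain ⟨qlim, hqlimmem, φ, hφ, hwlim⟩ :=
    (isCompact_sphere (0 : Fin d → ℝ) 1).tendsto_subseq hwmem
  have huφ : Tendsto (fun n => u (φ n)) atTop (𝓝 x) := hu.comp hφ.tendsto_atTop
  have hqlim0 : qlim ≠ 0 := by
    intro h
    rw [h] at hqlimmem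
    simp at hqlimmem
  have hdot0 : qlim ⬝ᵥ p = 0 := by
    have hc : Continuous (fun z : (Fin d → ℝ) × (Fin d → ℝ) => z.1 ⬝ᵥ z.2) :=
      continuous_fst.dotProduct continuous_snd
    have h1 : Tendsto (fun n => (w (φ n)) ⬝ᵥ (u (φ n)).1) atTop (𝓝 (qlim ⬝ᵥ p)) :=
      (hc.tendsto (qlim, p)).comp
        (hwlim.prodMk_nhds ((continuous_fst.tendsto x).comp huφ))
    have h2 : ∀ n, (w (φ n)) ⬝ᵥ (u (φ n)).1 = 0 := by
      intro n
      rw [hwdef]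
      simp only [smul_dotProduct, hqn1 (φ n), smul_eq_mul, mul_zero]
    rw [funext h2] at h1
    exact (tendsto_nhds_unique tendsto_const_nhds h1).symm ▸ rfl
  have hdotA : 0 ≤ qlim ⬝ᵥ (A *ᵥ qlim) := by
    have h1 : Tendsto (fun n => (w (φ n)) ⬝ᵥ
        (((u (φ n)).2 : Matrix (Fin d) (Fin d) ℝ) *ᵥ (w (φ n)))) atTop (𝓝 (qlim ⬝ᵥ (A *ᵥ qlim))) :=
      (hk.tendsto (qlim, A)).comp
        (hwlim.prodMk_nhds
          ((continuous_subtype_val.comp continuous_snd).tendsto x |>.comp huφ))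
    refine ge_of_tendsto h1 (Eventually.of_forall fun n => ?_)
    rw [hwdef]
    simp only [smul_dotProduct, Matrix.mulVec_smul, dotProduct_smul, smul_eq_mul]
    have := le_of_lt (hqn2 (φ n))
    positivity
  have hqlimA : qlim ⬝ᵥ (A *ᵥ qlim) = 0 := le_antisymm (hTmem qlim hdot0) hdotA
  exact key_zero A hAsymm p qlim hp hqlim0 hdot0 hTmem hqlimA

theorem Fop_continuous {d : ℕ} :
    Continuous (fun pA : (Fin d → ℝ) × {A : Matrix (Fin d) (Fin d) ℝ // A.IsSymm} =>
      Fop pA.1 (pA.2 : Matrix (Fin d) (Fin d) ℝ)) := by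
  have hg : Continuous (fun x : (Fin d → ℝ) × {A : Matrix (Fin d) (Fin d) ℝ // A.IsSymm} =>
      x.1 ⬝ᵥ (cof (-(x.2 : Matrix (Fin d) (Fin d) ℝ)) *ᵥ x.1)) := by
    unfold cof
    exact continuous_fst.dotProduct
      ((((continuous_subtype_val.comp continuous_snd).neg.matrix_adjugate).matrix_transpose).matrix_mulVec
        continuous_fst)
  have hfr : ∀ x ∈ frontier {y : (Fin d → ℝ) × {A : Matrix (Fin d) (Fin d) ℝ // A.IsSymm} |
      ∀ q : Fin d → ℝ, q ⬝ᵥ y.1 = 0 → q ⬝ᵥ ((y.2 : Matrix (Fin d) (Fin d) ℝ) *ᵥ q) ≤ 0},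
      x.1 ⬝ᵥ (cof (-(x.2 : Matrix (Fin d) (Fin d) ℝ)) *ᵥ x.1) = (0 : ℝ) := by
    intro x hx
    have h := frontier_zero x hx
    have hcof : cof (-(x.2 : Matrix (Fin d) (Fin d) ℝ))
        = adjugate (-(x.2 : Matrix (Fin d) (Fin d) ℝ)) := by
      unfold cof
      rw [Matrix.adjugate_transpose, Matrix.transpose_neg, x.2.2.eq]
    rw [hcof]
    exact h
  unfold Fop
  have := @Continuous.if ((Fin d → ℝ) × {A : Matrix (Fin d) (Fin d) ℝ // A.IsSymm}) ℝ _ _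
    (fun x => x.1 ⬝ᵥ (cof (-(x.2 : Matrix (Fin d) (Fin d) ℝ)) *ᵥ x.1)) (fun _ => (0:ℝ))
    (fun y => ∀ q : Fin d → ℝ, q ⬝ᵥ y.1 = 0 → q ⬝ᵥ ((y.2 : Matrix (Fin d) (Fin d) ℝ) *ᵥ q) ≤ 0)
    (fun a => Classical.propDecidable _) hfr hg continuous_const
  exact this
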